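/- Let F be a field of characteristic 2, n a natural number, and for each k let FΩ_k be the F-vector space with basis the k-element subsets of {1,...,n}. Define the linear map φ_t^k : FΩ_k → FΩ_{k−t} sending each k-subset Y to the sum of all (k−t)-subsets of Y. Then for all t ≥ 1 and all k, the composite φ_t^k followed by φ_t^{k−t} is the zero map. -/

import Mathlib

/-- The free `F`-vector space on the `k`-element subsets of `{1,…,n}` (here `k : ℤ`,
so that the space is zero for `k < 0`). -/
def FOmega (F : Type*) [Field F] (n : ℕ) (k : ℤ) : Type _ :=
  {s : Finset (Fin n) // (s.card : ℤ) = k} →₀ F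

noncomputable instance (F : Type*) [Field F] (n : ℕ) (k : ℤ) :
    AddCommGroup (FOmega F n k) := Finsupp.instAddCommGroup

noncomputable instance (F : Type*) [Field F] (n : ℕ) (k : ℤ) :
    Module F (FOmega F n k) := Finsupp.module _ _

/-- The multistep boundary map `FΩ_a → FΩ_b`, sending a subset `Y` of size `a`
to the sum of all its subsets of size `b` (this is `φ_t^a` with `t = a - b`). -/
noncomputable def phi (F : Type*) [Field F] (n : ℕ) (a b : ℤ) :
    FOmega F n a →ₗ[F] FOmega F n b :=
  Finsupp.lift _ F _ fun Y =>
    ∑ X ∈ (Y.1.powerset.filter fun X => (X.card : ℤ) = b).attach,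
      Finsupp.single ⟨X.1, (Finset.mem_filter.mp X.2).2⟩ (1 : F)


lemma two_dvd_central (s : ℕ) (hs : 1 ≤ s) : 2 ∣ (2 * s).choose s := by
  obtain ⟨m, rfl⟩ := Nat.exists_eq_add_of_le hs
  have h1 : 2 * (1 + m) = (2 * m + 1) + 1 := by ring
  have h2 : 1 + m = m + 1 := by ring
  rw [h1, h2, Nat.choose_succ_succ]
  have : (2 * m + 1).choose (m + 1) = (2 * m + 1).choose m := by
    have := Nat.choose_symm (n := 2 * m + 1) (k := m + 1) (by omega)
    have e : 2 * m + 1 - (m + 1) = m := by omega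
    rw [e] at this
    exact this.symm
  rw [this]
  omega

lemma card_between {α : Type*} [DecidableEq α] (Y Z : Finset α) (m : ℕ)
    (hZY : Z ⊆ Y) (hm : Z.card ≤ m) :
    ((Y.powerset.filter fun X => X.card = m ∧ Z ⊆ X)).card
      = (Y.card - Z.card).choose (m - Z.card) := by
  have : ((Y.powerset.filter fun X => X.card = m ∧ Z ⊆ X)).card
      = ((Y \ Z).powerset.filter fun W => W.card = m - Z.card).card := by
    apply Finset.card_bij' (fun X _ => X \ Z) (fun W _ => W ∪ Z)
    · intro X hX
      simp only [Finset.mem_filter, Finset.mem_powerset] at hX ⊢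
      obtain ⟨hXY, hXm, hZX⟩ := hX
      exact ⟨Finset.sdiff_subset_sdiff hXY le_rfl,
        by rw [Finset.card_sdiff_of_subset hZX, hXm]⟩
    · intro W hW
      simp only [Finset.mem_filter, Finset.mem_powerset] at hW ⊢
      obtain ⟨hWY, hWm⟩ := hW
      have hdisj : Disjoint W Z :=
        Finset.disjoint_of_subset_left hWY (Finset.sdiff_disjoint)
      refine ⟨Finset.union_subset (hWY.trans Finset.sdiff_subset) hZY, ?_,
        Finset.subset_union_right⟩
      rw [Finset.card_union_of_disjoint hdisj, hWm]
      omega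
    · intro X hX
      simp only [Finset.mem_filter, Finset.mem_powerset] at hX
      exact Finset.sdiff_union_of_subset hX.2.2
    · intro W hW
      simp only [Finset.mem_filter, Finset.mem_powerset] at hW
      exact Finset.union_sdiff_cancel_right
        (Finset.disjoint_of_subset_left hW.1 Finset.sdiff_disjoint)
  rw [this, ← Finset.powersetCard_eq_filter, Finset.card_powersetCard,
    Finset.card_sdiff_of_subset hZY]

lemma phi_single (F : Type*) [Field F] (n : ℕ) (a b : ℤ)
    (Y : {s : Finset (Fin n) // (s.card : ℤ) = a}) (c : F) :
    phi F n a b (Finsupp.single Y c)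
      = c • ∑ X ∈ (Y.1.powerset.filter fun X => (X.card : ℤ) = b).attach,
          Finsupp.single (⟨X.1, (Finset.mem_filter.mp X.2).2⟩ :
            {s : Finset (Fin n) // (s.card : ℤ) = b}) (1 : F) := by
  rw [phi]
  erw [Finsupp.lift_apply, Finsupp.sum_single_index]
  rfl
  exact zero_smul _ _

/-- over a field of characteristic two, the composite
`φ_t^k : FΩ_k → FΩ_{k-t}` followed by `φ_t^{k-t} : FΩ_{k-t} → FΩ_{k-2t}` is zero,
for every `t ≥ 1`. -/
theorem phi_comp_phi_eq_zero (F : Type*) [Field F] [CharP F 2] (n : ℕ)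
    (t : ℤ) (ht : 1 ≤ t) (k : ℤ) :
    (phi F n (k - t) (k - 2 * t)).comp (phi F n k (k - t)) = 0 := by
  apply LinearMap.ext
  intro x
  induction x using Finsupp.induction_linear with
  | zero => exact LinearMap.map_zero _
  | add f g hf hg => exact (LinearMap.map_add _ f g).trans (by erw [hf, hg]; exact add_zero _)
  | single Y c => ?_
  change phi F n (k - t) (k - 2 * t) (phi F n k (k - t) (Finsupp.single Y c)) = 0
  rw [phi_single]
  erw [map_smul, map_sum,
    Finset.sum_congr rfl (fun X _ => phi_single F n (k - t) (k - 2 * t) _ 1)]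
  simp only [one_smul]
  suffices h : (∑ X ∈ ((Y.1.powerset.filter fun X => (X.card : ℤ) = k - t)).attach,
      ∑ Z ∈ ((X.1.powerset.filter fun Z => (Z.card : ℤ) = k - 2 * t)).attach,
        Finsupp.single (⟨Z.1, (Finset.mem_filter.mp Z.2).2⟩ :
          {s : Finset (Fin n) // (s.card : ℤ) = k - 2 * t}) (1 : F)) = 0 by
    erw [h, smul_zero]
  ext Z₀
  rw [Finsupp.coe_zero, Pi.zero_apply]
  rw [Finset.sum_apply']
  have inner : ∀ X : {x // x ∈ Y.1.powerset.filter fun X => (X.card : ℤ) = k - t},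
      (∑ Z ∈ ((X.1.powerset.filter fun Z => (Z.card : ℤ) = k - 2 * t)).attach,
        Finsupp.single (⟨Z.1, (Finset.mem_filter.mp Z.2).2⟩ :
          {s : Finset (Fin n) // (s.card : ℤ) = k - 2 * t}) (1 : F)) Z₀
      = if Z₀.1 ∈ X.1.powerset.filter fun Z => (Z.card : ℤ) = k - 2 * t
          then (1 : F) else 0 := by
    intro X
    rw [Finset.sum_apply']
    have : ∀ Z : {x // x ∈ X.1.powerset.filter fun Z => (Z.card : ℤ) = k - 2 * t},
        Finsupp.single (⟨Z.1, (Finset.mem_filter.mp Z.2).2⟩ :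
          {s : Finset (Fin n) // (s.card : ℤ) = k - 2 * t}) (1 : F) Z₀
        = if Z.1 = Z₀.1 then (1 : F) else 0 := by
      intro Z
      rw [Finsupp.single_apply]
      congr 1
      simp [Subtype.ext_iff]
    rw [Finset.sum_congr rfl (fun Z _ => this Z)]
    rw [Finset.sum_attach _ (fun Z => if Z = Z₀.1 then (1 : F) else 0)]
    exact Finset.sum_ite_eq' _ _ (fun _ => (1 : F))
  rw [Finset.sum_congr rfl (fun X _ => inner X)]
  have hout := Finset.sum_attach
    (Finset.filter (fun X => (X.card : ℤ) = k - t) Y.1.powerset)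
    (fun X => if Z₀.1 ∈ Finset.filter (fun Z => (Z.card : ℤ) = k - 2 * t) X.powerset
      then (1 : F) else 0)
  rw [hout]
  rw [Finset.sum_boole]
  -- now show the card is even
  set S := (Y.1.powerset.filter fun X => (X.card : ℤ) = k - t).filter
      (fun X => Z₀.1 ∈ X.powerset.filter fun Z => (Z.card : ℤ) = k - 2 * t) with hS
  suffices hdvd : 2 ∣ S.card by
    rw [(CharP.cast_eq_zero_iff F 2 S.card).mpr hdvd]
  by_cases hZY : Z₀.1 ⊆ Y.1
  · set t' := t.toNat with ht'
    have htt : (t' : ℤ) = t := Int.toNat_of_nonneg (by omega)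
    have hset : S = Y.1.powerset.filter
        (fun X => X.card = Z₀.1.card + t' ∧ Z₀.1 ⊆ X) := by
      ext X
      simp only [hS, Finset.mem_filter, Finset.mem_powerset]
      have hz := Z₀.2
      constructor
      · rintro ⟨⟨h1, h2⟩, h3, h4⟩
        exact ⟨h1, by omega, h3⟩
      · rintro ⟨h1, h2, h3⟩
        exact ⟨⟨h1, by omega⟩, h3, hz⟩
    rw [hset, card_between _ _ _ hZY (by omega)]
    have hY : Y.1.card = Z₀.1.card + 2 * t' := by
      have := Y.2; have := Z₀.2; omega
    rw [hY]
    have e1 : Z₀.1.card + 2 * t' - Z₀.1.card = 2 * t' := by omega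
    have e2 : Z₀.1.card + t' - Z₀.1.card = t' := by omega
    rw [e1, e2]
    exact two_dvd_central t' (by omega)
  · have : S = ∅ := by
      ext X
      simp only [hS, Finset.mem_filter, Finset.mem_powerset, Finset.notMem_empty,
        iff_false]
      rintro ⟨⟨h1, _⟩, h3, _⟩
      exact hZY (h3.trans h1)
    simp [this]
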